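/- Consider Discounted HEDGE with K ≥ 2 experts, discounting factor γ ∈ (0,1), time horizon N ≥ 1, penalty parameter β = 1 / (1 + √(2 · ln K · (1−γ)/(1−γ^N))), initial weights w_k[1] = W > 0 for all k, losses l^{(k)}[n] ∈ [0,1], weight recurrence w_k[n+1] = (w_k[n])^{γ} · β^{l^{(k)}[n]}, probabilities p^{(k)}[n] = (w_k[n])^{γ} / Σ_{j=1}^{K} (w_j[n])^{γ}, expert losses L_{k,N}(γ) = Σ_{n=1}^{N} γ^{N−n} l^{(k)}[n], and predictor loss L_N(γ) = Σ_{n=1}^{N} γ^{N−n} Σ_{k=1}^{K} p^{(k)}[n] l^{(k)}[n]. Assume the anti-monotonicity condition: for every n and all j, k, if w_j[n] ≤ w_k[n] then l^{(j)}[n] ≥ l^{(k)}[n]. Let k* be an expert minimizing L_{k,N}(γ). Then L_N(γ) ≤ L_{k*,N}(γ) + √(2 · ln K · (1−γ^N)/(1−γ)) + ln K. -/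

import Mathlib

open Finset in
lemma aux_log_le {x : ℝ} (hx : 1 ≤ x) : Real.log x ≤ (x - x⁻¹) / 2 := by
  have h0 : ∀ y ∈ Set.Ici (1:ℝ), (0:ℝ) < y := fun y hy => lt_of_lt_of_le one_pos hy
  set f : ℝ → ℝ := fun y => (y - y⁻¹) / 2 - Real.log y with hf
  have hmono : MonotoneOn f (Set.Ici 1) := by
    apply monotoneOn_of_hasDerivWithinAt_nonneg (f' := fun y => (1 - -(y^2)⁻¹)/2 - y⁻¹)
      (convex_Ici 1)
    · apply ContinuousOn.sub
      · exact (continuousOn_id.sub (continuousOn_id.inv₀ (fun y hy => (h0 y hy).ne'))).div_const 2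
      · exact Real.continuousOn_log.mono (fun y hy => (h0 y hy).ne')
    · intro y hy
      have hy1 : (1:ℝ) < y := by simpa [interior_Ici] using hy
      have hyne : y ≠ 0 := by linarith
      exact (((hasDerivAt_id y).sub (hasDerivAt_inv hyne)).div_const 2 |>.sub
        (Real.hasDerivAt_log hyne)).hasDerivWithinAt
    · intro y hy
      have hy1 : (1:ℝ) < y := by simpa [interior_Ici] using hy
      have hy0 : (0:ℝ) < y := by linarith
      have h1 : (y^2)⁻¹ = (y⁻¹)^2 := by rw [inv_pow]
      have h2 : y * y⁻¹ = 1 := mul_inv_cancel₀ hy0.ne'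
      have h3 : y⁻¹ ≤ 1 := by
        rw [inv_le_one_iff₀]; right; exact hy1.le
      rw [h1]
      nlinarith [sq_nonneg (y⁻¹ - 1)]
  have := hmono (Set.mem_Ici.mpr le_rfl) (Set.mem_Ici.mpr hx) hx
  simp only [hf, Real.log_one, inv_one] at this
  linarith

lemma aux_rpow_le {β t : ℝ} (hβ : 0 < β) (h0 : 0 ≤ t) (h1 : t ≤ 1) :
    β ^ t ≤ 1 - (1 - β) * t := by
  have h := convexOn_exp.2 (Set.mem_univ (Real.log β)) (Set.mem_univ (0:ℝ)) h0
    (by linarith : (0:ℝ) ≤ 1 - t) (by ring)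
  simp only [smul_eq_mul, mul_zero, add_zero, Real.exp_zero, Real.exp_log hβ] at h
  rw [Real.rpow_def_of_pos hβ]
  calc Real.exp (Real.log β * t) = Real.exp (t * Real.log β) := by rw [mul_comm]
    _ ≤ t * β + (1 - t) * 1 := h
    _ = 1 - (1 - β) * t := by ring

/-- main regret theorem for Discounted HEDGE with discounting factor
`γ ∈ (0,1)` and the optimally tuned `β = 1/(1 + √(2 ln K (1-γ)/(1-γ^N)))`: under the
anti-monotonicity condition, the predictor loss satisfies
`L_N(γ) ≤ L_{k*,N}(γ) + √(2 ln K (1-γ^N)/(1-γ)) + ln K`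
where `k*` minimizes the discounted expert loss. -/
theorem discounted_hedge_regret_bound
    (K : ℕ) (hK : 2 ≤ K) (γ W : ℝ)
    (hγ : γ ∈ Set.Ioo (0 : ℝ) 1) (hW : 0 < W)
    (N : ℕ) (hN : 1 ≤ N)
    (β : ℝ)
    (hβ : β = 1 / (1 + Real.sqrt (2 * Real.log K * ((1 - γ) / (1 - γ ^ N)))))
    (w l : ℕ → ℕ → ℝ)
    (hl : ∀ k ∈ Finset.Icc 1 K, ∀ n, 1 ≤ n → l k n ∈ Set.Icc (0 : ℝ) 1)
    (hw1 : ∀ k ∈ Finset.Icc 1 K, w k 1 = W)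
    (hrec : ∀ k ∈ Finset.Icc 1 K, ∀ n, 1 ≤ n →
      w k (n + 1) = (w k n) ^ γ * β ^ (l k n))
    (hanti : ∀ n, 1 ≤ n → ∀ j ∈ Finset.Icc 1 K, ∀ k ∈ Finset.Icc 1 K,
      w j n ≤ w k n → l k n ≤ l j n)
    (kstar : ℕ) (hkstar : kstar ∈ Finset.Icc 1 K)
    (hmin : ∀ k ∈ Finset.Icc 1 K,
      ∑ n ∈ Finset.Icc 1 N, γ ^ (N - n) * l kstar n ≤
        ∑ n ∈ Finset.Icc 1 N, γ ^ (N - n) * l k n) :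
    ∑ n ∈ Finset.Icc 1 N, γ ^ (N - n) *
        ∑ k ∈ Finset.Icc 1 K,
          ((w k n) ^ γ / ∑ j ∈ Finset.Icc 1 K, (w j n) ^ γ) * l k n ≤
      (∑ n ∈ Finset.Icc 1 N, γ ^ (N - n) * l kstar n) +
        Real.sqrt (2 * Real.log K * ((1 - γ ^ N) / (1 - γ))) + Real.log K := by
  obtain ⟨hγ0, hγ1⟩ := hγ
  have hK1 : (1:ℝ) < K := by exact_mod_cast hK.trans_lt' one_lt_two |>.trans_le le_rfl
  have hK0 : (0:ℝ) < K := by linarith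
  set R : ℝ := Real.log K with hR
  clear_value R
  have hR0 : 0 < R := by rw [hR]; exact Real.log_pos hK1
  have hgN : γ ^ N < 1 := pow_lt_one₀ hγ0.le hγ1 (by omega)
  have hgNpos : 0 < γ ^ N := pow_pos hγ0 N
  have h1γ : 0 < 1 - γ := by linarith
  have h1gN : 0 < 1 - γ ^ N := by linarith
  set Lt : ℝ := (1 - γ ^ N) / (1 - γ) with hLt
  clear_value Lt
  have hLt0 : 0 < Lt := by rw [hLt]; exact div_pos h1gN h1γ
  set a : ℝ := Real.sqrt (2 * R * ((1 - γ) / (1 - γ ^ N))) with ha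
  clear_value a
  have hposarg : 0 < 2 * R * ((1 - γ) / (1 - γ ^ N)) :=
    mul_pos (by linarith) (div_pos h1γ h1gN)
  have haq : a ^ 2 = 2 * R * ((1 - γ) / (1 - γ ^ N)) := by
    rw [ha]; exact Real.sq_sqrt hposarg.le
  have ha0 : 0 < a := by
    rw [ha]; exact Real.sqrt_pos.mpr hposarg
  have h1a : (0:ℝ) < 1 + a := by linarith
  have hβa : β = 1 / (1 + a) := hβ
  have hβ0 : 0 < β := by rw [hβa]; exact div_pos one_pos h1a
  have hβ1 : β < 1 := by
    rw [hβa, div_lt_one h1a]; linarith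
  have h2R : a ^ 2 * Lt = 2 * R := by
    rw [haq, hLt]
    field_simp
  -- positivity of weights
  have hwpos : ∀ n, 1 ≤ n → ∀ k ∈ Finset.Icc 1 K, 0 < w k n := by
    intro n hn
    induction n, hn using Nat.le_induction with
    | base => intro k hk; rw [hw1 k hk]; exact hW
    | succ n hn ih =>
      intro k hk
      rw [hrec k hk n hn]
      exact mul_pos (Real.rpow_pos_of_pos (ih k hk) γ) (Real.rpow_pos_of_pos hβ0 _)
  set Φ : ℕ → ℝ := fun n => ∑ k ∈ Finset.Icc 1 K, w k n with hΦ
  clear_value Φ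
  have hne : (Finset.Icc 1 K).Nonempty :=
    ⟨1, Finset.mem_Icc.mpr ⟨le_rfl, hK.trans' one_le_two⟩⟩
  have hΦpos : ∀ n, 1 ≤ n → 0 < Φ n := by
    intro n hn
    rw [hΦ]
    exact Finset.sum_pos (fun k hk => hwpos n hn k hk) hne
  set P : ℕ → ℝ := fun n => ∑ k ∈ Finset.Icc 1 K, (w k n) ^ γ with hP
  clear_value P
  have hPpos : ∀ n, 1 ≤ n → 0 < P n := by
    intro n hn
    rw [hP]
    exact Finset.sum_pos (fun k hk => Real.rpow_pos_of_pos (hwpos n hn k hk) γ) hne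
  set e : ℕ → ℝ := fun n => ∑ k ∈ Finset.Icc 1 K, ((w k n) ^ γ / P n) * l k n with he
  clear_value e
  have hcard : (Finset.Icc 1 K).card = K := by rw [Nat.card_Icc]; omega
  -- power mean inequality
  have hpm : ∀ n, 1 ≤ n → P n ≤ (K:ℝ) * ((K:ℝ)⁻¹ * Φ n) ^ γ := by
    intro n hn
    have hip : (1:ℝ) ≤ 1 / γ := by
      rw [le_div_iff₀ hγ0]; linarith
    have h := Real.arith_mean_le_rpow_mean (Finset.Icc 1 K)
      (fun _ => (K:ℝ)⁻¹) (fun k => (w k n) ^ γ)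
      (fun i _ => by positivity)
      (by rw [Finset.sum_const, hcard, nsmul_eq_mul]; field_simp)
      (fun i hi => Real.rpow_nonneg (hwpos n hn i hi).le γ) hip
    rw [one_div_one_div] at h
    have hs1 : ∑ i ∈ Finset.Icc 1 K, (K:ℝ)⁻¹ * (w i n) ^ γ = (K:ℝ)⁻¹ * P n := by
      rw [hP, ← Finset.mul_sum]
    have hs2 : ∑ i ∈ Finset.Icc 1 K, (K:ℝ)⁻¹ * ((w i n) ^ γ) ^ (1/γ)
        = (K:ℝ)⁻¹ * Φ n := by
      rw [hΦ, ← Finset.mul_sum]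
      congr 1
      apply Finset.sum_congr rfl
      intro i hi
      rw [← Real.rpow_mul (hwpos n hn i hi).le, mul_one_div_cancel hγ0.ne', Real.rpow_one]
    rw [hs1, hs2] at h
    calc P n = (K:ℝ) * ((K:ℝ)⁻¹ * P n) := by field_simp
      _ ≤ (K:ℝ) * ((K:ℝ)⁻¹ * Φ n) ^ γ := mul_le_mul_of_nonneg_left h hK0.le
  -- key per-step inequality
  have hstep : ∀ n, 1 ≤ n →
      Real.log (Φ (n + 1)) ≤ (1 - γ) * R + γ * Real.log (Φ n) - (1 - β) * e n := by
    intro n hn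
    have hΦn1 := hΦpos (n+1) (by omega)
    have hΦn := hΦpos n hn
    have hPn := hPpos n hn
    have hPe : P n * e n = ∑ k ∈ Finset.Icc 1 K, (w k n) ^ γ * l k n := by
      rw [he]
      rw [Finset.mul_sum]
      apply Finset.sum_congr rfl
      intro k hk
      field_simp
    have h1 : Φ (n+1) = ∑ k ∈ Finset.Icc 1 K, (w k n) ^ γ * β ^ (l k n) := by
      rw [hΦ]
      exact Finset.sum_congr rfl (fun k hk => hrec k hk n hn)
    have h2 : ∑ k ∈ Finset.Icc 1 K, (w k n) ^ γ * β ^ (l k n)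
        ≤ ∑ k ∈ Finset.Icc 1 K, (w k n) ^ γ * (1 - (1 - β) * l k n) := by
      apply Finset.sum_le_sum
      intro k hk
      exact mul_le_mul_of_nonneg_left
        (aux_rpow_le hβ0 (hl k hk n hn).1 (hl k hk n hn).2)
        (Real.rpow_nonneg (hwpos n hn k hk).le γ)
    have h3 : ∑ k ∈ Finset.Icc 1 K, (w k n) ^ γ * (1 - (1 - β) * l k n)
        = P n * (1 - (1 - β) * e n) := by
      have hc : ∀ k ∈ Finset.Icc 1 K, (w k n) ^ γ * (1 - (1 - β) * l k n)
          = (w k n) ^ γ - (1 - β) * ((w k n) ^ γ * l k n) := fun k _ => by ring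
      have hRP : ∑ k ∈ Finset.Icc 1 K, (w k n) ^ γ = P n := by simp only [hP]
      rw [Finset.sum_congr rfl hc, Finset.sum_sub_distrib, ← Finset.mul_sum, ← hPe, hRP]
      ring
    have hA : Φ (n+1) ≤ P n * (1 - (1 - β) * e n) := by
      rw [h1, ← h3]; exact h2
    have hB : Φ (n+1) ≤ P n * Real.exp (-((1 - β) * e n)) := by
      refine hA.trans (mul_le_mul_of_nonneg_left ?_ hPn.le)
      have := Real.add_one_le_exp (-((1 - β) * e n))
      linarith
    have hC : Φ (n+1) ≤ (K:ℝ) * ((K:ℝ)⁻¹ * Φ n) ^ γ * Real.exp (-((1 - β) * e n)) :=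
      hB.trans (mul_le_mul_of_nonneg_right (hpm n hn) (Real.exp_nonneg _))
    have hKΦ : 0 < (K:ℝ)⁻¹ * Φ n := mul_pos (inv_pos.mpr hK0) hΦn
    have hD := Real.log_le_log hΦn1 hC
    rw [Real.log_mul (mul_pos hK0 (Real.rpow_pos_of_pos hKΦ γ)).ne' (Real.exp_ne_zero _),
      Real.log_mul hK0.ne' (Real.rpow_pos_of_pos hKΦ γ).ne',
      Real.log_exp, Real.log_rpow hKΦ,
      Real.log_mul (inv_pos.mpr hK0).ne' hΦn.ne', Real.log_inv] at hD
    have hE : (1 - γ) * R + γ * Real.log (Φ n) - (1 - β) * e n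
        = Real.log (K:ℝ) + γ * (-Real.log (K:ℝ) + Real.log (Φ n)) + -((1 - β) * e n) := by
      rw [hR]; ring
    rw [hE]; exact hD
  -- unrolled inequality
  have hunroll : ∀ m : ℕ, Real.log (Φ (m + 1)) ≤
      R + γ ^ m * Real.log W - (1 - β) * ∑ n ∈ Finset.Icc 1 m, γ ^ (m - n) * e n := by
    intro m
    induction m with
    | zero =>
      have h1 : Φ 1 = (K:ℝ) * W := by
        simp only [hΦ]
        rw [Finset.sum_congr rfl (fun k hk => hw1 k hk), Finset.sum_const, hcard,
          nsmul_eq_mul]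
      rw [h1, Real.log_mul hK0.ne' hW.ne',
        Finset.Icc_eq_empty (by omega : ¬(1:ℕ) ≤ 0)]
      simp [hR]
    | succ m ih =>
      have h1 := hstep (m+1) (by omega)
      have hsum : ∑ n ∈ Finset.Icc 1 (m+1), γ ^ (m+1-n) * e n
          = γ * ∑ n ∈ Finset.Icc 1 m, γ ^ (m-n) * e n + e (m+1) := by
        rw [Finset.sum_Icc_succ_top (by omega : 1 ≤ m+1), Nat.sub_self, pow_zero, one_mul,
          Finset.mul_sum]
        congr 1
        apply Finset.sum_congr rfl
        intro n hn
        have hnm : n ≤ m := (Finset.mem_Icc.mp hn).2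
        rw [show m+1-n = (m-n)+1 from by omega, pow_succ]
        ring
      rw [hsum]
      have h2 := mul_le_mul_of_nonneg_left ih hγ0.le
      have h3 : γ * (R + γ ^ m * Real.log W
            - (1 - β) * ∑ n ∈ Finset.Icc 1 m, γ ^ (m - n) * e n)
          = γ * R + γ ^ (m+1) * Real.log W
            - (1 - β) * (γ * ∑ n ∈ Finset.Icc 1 m, γ ^ (m - n) * e n) := by ring
      have h4 : (1 - β) * (γ * ∑ n ∈ Finset.Icc 1 m, γ ^ (m - n) * e n + e (m+1))
          = (1 - β) * (γ * ∑ n ∈ Finset.Icc 1 m, γ ^ (m - n) * e n)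
            + (1 - β) * e (m + 1) := by ring
      linarith only [h1, h2, h3, h4]
  -- closed form for the best expert
  have hclosed : ∀ m : ℕ, w kstar (m + 1) =
      W ^ (γ ^ m) * β ^ (∑ n ∈ Finset.Icc 1 m, γ ^ (m - n) * l kstar n) := by
    intro m
    induction m with
    | zero =>
      rw [hw1 kstar hkstar, Finset.Icc_eq_empty (by omega : ¬(1:ℕ) ≤ 0)]
      simp
    | succ m ih =>
      have hsum2 : ∑ n ∈ Finset.Icc 1 (m+1), γ ^ (m+1-n) * l kstar n
          = (∑ n ∈ Finset.Icc 1 m, γ ^ (m-n) * l kstar n) * γ + l kstar (m+1) := by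
        rw [Finset.sum_Icc_succ_top (by omega : 1 ≤ m+1), Nat.sub_self, pow_zero, one_mul,
          Finset.sum_mul]
        congr 1
        apply Finset.sum_congr rfl
        intro n hn
        have hnm : n ≤ m := (Finset.mem_Icc.mp hn).2
        rw [show m+1-n = (m-n)+1 from by omega, pow_succ]
        ring
      rw [hrec kstar hkstar (m+1) (by omega), ih,
        Real.mul_rpow (Real.rpow_nonneg hW.le _) (Real.rpow_nonneg hβ0.le _),
        ← Real.rpow_mul hW.le, ← Real.rpow_mul hβ0.le, mul_assoc,
        ← Real.rpow_add hβ0, ← pow_succ, ← hsum2]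
  set Ls : ℝ := ∑ n ∈ Finset.Icc 1 N, γ ^ (N - n) * l kstar n with hLs
  clear_value Ls
  set LN : ℝ := ∑ n ∈ Finset.Icc 1 N, γ ^ (N - n) * e n with hLN
  clear_value LN
  -- lower bound on the final potential
  have hlow : γ ^ N * Real.log W + Ls * Real.log β ≤ Real.log (Φ (N + 1)) := by
    have h1 : w kstar (N+1) ≤ Φ (N+1) := by
      rw [hΦ]
      exact Finset.single_le_sum (fun k hk => (hwpos (N+1) (by omega) k hk).le) hkstar
    have h2 := Real.log_le_log (hwpos (N+1) (by omega) kstar hkstar) h1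
    rw [hclosed N, Real.log_mul (Real.rpow_pos_of_pos hW _).ne'
      (Real.rpow_pos_of_pos hβ0 _).ne', Real.log_rpow hW, Real.log_rpow hβ0, ← hLs] at h2
    exact h2
  have hmain : (1 - β) * LN ≤ R - Ls * Real.log β := by
    have h := hlow.trans (hunroll N)
    rw [← hLN] at h
    linarith only [h]
  -- arithmetic conclusion
  have hLs0 : 0 ≤ Ls := by
    rw [hLs]
    apply Finset.sum_nonneg
    intro n hn
    have hn1 : 1 ≤ n := (Finset.mem_Icc.mp hn).1
    exact mul_nonneg (pow_nonneg hγ0.le _) (hl kstar hkstar n hn1).1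
  have hgeom : ∑ n ∈ Finset.Icc 1 N, γ ^ (N - n) = Lt := by
    rw [hLt, ← Finset.Ico_add_one_right_eq_Icc, Finset.sum_Ico_eq_sum_range]
    have h2 : ∀ i ∈ Finset.range (N + 1 - 1), γ ^ (N - (1 + i)) = γ ^ (N - 1 - i) := by
      intro i hi; congr 1; omega
    rw [Finset.sum_congr rfl h2, show N + 1 - 1 = N from rfl,
      Finset.sum_range_reflect (fun j => γ ^ j) N, geom_sum_eq hγ1.ne N,
      div_eq_div_iff (by linarith) (by linarith)]
    ring
  have hLsle : Ls ≤ Lt := by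
    rw [hLs, ← hgeom]
    apply Finset.sum_le_sum
    intro n hn
    have hn1 : 1 ≤ n := (Finset.mem_Icc.mp hn).1
    calc γ ^ (N - n) * l kstar n ≤ γ ^ (N - n) * 1 :=
      mul_le_mul_of_nonneg_left (hl kstar hkstar n hn1).2 (pow_nonneg hγ0.le _)
      _ = γ ^ (N - n) := mul_one _
  have hlogβ : - Real.log β = Real.log (1 + a) := by
    rw [hβa, one_div, Real.log_inv, neg_neg]
  have hlog1a : Real.log (1 + a) ≤ a * (2 + a) / (2 * (1 + a)) := by
    have h1 := aux_log_le (x := 1 + a) (by linarith)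
    have heq : ((1 + a) - (1 + a)⁻¹) / 2 = a * (2 + a) / (2 * (1 + a)) := by
      rw [div_eq_div_iff two_ne_zero (by positivity)]
      field_simp
      ring
    linarith [heq ▸ h1]
  have h2R2 : 2 * R * Lt = (a * Lt) ^ 2 := by
    rw [mul_pow]; linear_combination (-Lt) * h2R
  have hsqrt : Real.sqrt (2 * R * Lt) = a * Lt := by
    rw [h2R2, Real.sqrt_sq (mul_nonneg ha0.le hLt0.le)]
  have hfinal : LN ≤ Ls + a * Lt + R := by
    have h1β : 1 - β = a / (1 + a) := by
      rw [hβa, eq_div_iff h1a.ne']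
      field_simp
      ring
    have hlc : Ls * Real.log (1 + a) = -(Ls * Real.log β) := by rw [← hlogβ]; ring
    have hm2 : (1 - β) * LN ≤ R + Ls * Real.log (1 + a) := by linarith only [hmain, hlc]
    have h5 : a * LN ≤ (R + Ls * Real.log (1 + a)) * (1 + a) := by
      have h := mul_le_mul_of_nonneg_right hm2 h1a.le
      have hexp : (1 - β) * LN * (1 + a) = a * LN := by
        rw [h1β, div_mul_eq_mul_div, div_mul_eq_mul_div, div_eq_iff h1a.ne']
        try ring
      linarith only [h, hexp]
    have h6 : Real.log (1 + a) * (1 + a) ≤ a * (2 + a) / 2 := by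
      have h := mul_le_mul_of_nonneg_right hlog1a h1a.le
      have hexp : a * (2 + a) / (2 * (1 + a)) * (1 + a) = a * (2 + a) / 2 := by
        rw [div_mul_eq_mul_div, div_eq_div_iff (by positivity) two_ne_zero]
        try ring
      linarith only [h, hexp]
    have h7 : Ls * (Real.log (1 + a) * (1 + a)) ≤ Ls * (a * (2 + a) / 2) :=
      mul_le_mul_of_nonneg_left h6 hLs0
    have h9 : a * LN ≤ R + a * R + a * Ls + a ^ 2 * Ls / 2 := by linarith only [h5, h7]
    have h8 : a ^ 2 * Ls ≤ a ^ 2 * Lt := mul_le_mul_of_nonneg_left hLsle (sq_nonneg a)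
    have h10 : a * LN ≤ a * (Ls + a * Lt + R) := by linarith only [h9, h8, h2R]
    exact le_of_mul_le_mul_left h10 ha0
  have hgoalLHS : ∑ n ∈ Finset.Icc 1 N, γ ^ (N - n) *
      ∑ k ∈ Finset.Icc 1 K,
        ((w k n) ^ γ / ∑ j ∈ Finset.Icc 1 K, (w j n) ^ γ) * l k n = LN := by
    rw [hLN]
    apply Finset.sum_congr rfl
    intro n hn
    rw [he, hP]
  rw [hgoalLHS, hsqrt]
  exact hfinal
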